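/- Let λ > 0 and u_1, u_2 ∈ ℝ. The function F_2(λ; t, u) = exp(i u_2 (t_1 + t_2))·∫_{ℝ} exp(i s (u_1 − u_2))·∏_{j=1}^{2} (2 cosh(t_j − s))^{−λ} ds, for real t_1 ≠ t_2, satisfies the bound |F_2(λ; t, u)| ≤ C(λ) · (t_1 − t_2)/sinh(λ (t_1 − t_2)) for some constant C(λ) depending only on λ. -/

import Mathlib

open MeasureTheory Real Set

lemma intOn_exp_Iic {c : ℝ} (hc : 0 < c) (a : ℝ) :
    IntegrableOn (fun x : ℝ => Real.exp (c * x)) (Iic a) := by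
  have h : IntegrableOn (fun x : ℝ => Real.exp (-(c * x))) (Ioi (-a)) := by
    simpa [neg_mul] using exp_neg_integrableOn_Ioi (-a) hc
  have key := (Measure.measurePreserving_neg (volume : Measure ℝ)).integrableOn_comp_preimage
      (Homeomorph.neg ℝ).measurableEmbedding (f := fun x : ℝ => Real.exp (-(c * x))) (s := Ioi (-a))
  rw [key.symm] at h
  rw [integrableOn_Iic_iff_integrableOn_Iio]
  simpa [Function.comp_def, neg_preimage, neg_Ioi, neg_neg] using h

lemma int_exp_Iic {c : ℝ} (hc : 0 < c) (a : ℝ) :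
    ∫ x in Iic a, Real.exp (c * x) = Real.exp (c * a) / c := by
  have h := integral_comp_neg_Iic a (fun x : ℝ => Real.exp (-(c * x)))
  simp only [mul_neg, neg_neg] at h
  rw [h]
  have h2 := integral_comp_mul_left_Ioi (fun y : ℝ => Real.exp (-y)) (-a) hc
  simp only [smul_eq_mul] at h2
  rw [h2, integral_exp_neg_Ioi]
  rw [mul_neg, neg_neg]
  field_simp

lemma intOn_exp_neg_Ioi {c : ℝ} (hc : 0 < c) (b : ℝ) :
    IntegrableOn (fun x : ℝ => Real.exp (-(c * x))) (Ioi b) := by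
  simpa [neg_mul] using exp_neg_integrableOn_Ioi b hc

lemma int_exp_neg_Ioi {c : ℝ} (hc : 0 < c) (b : ℝ) :
    ∫ x in Ioi b, Real.exp (-(c * x)) = Real.exp (-(c * b)) / c := by
  have h2 := integral_comp_mul_left_Ioi (fun y : ℝ => Real.exp (-y)) b hc
  simp only [smul_eq_mul] at h2
  rw [h2, integral_exp_neg_Ioi]
  field_simp

lemma key_lemma (lam : ℝ) (hlam : 0 < lam) {a b : ℝ} (hab : a ≤ b) :
    Integrable (fun s : ℝ => Real.exp (-(lam * |a - s|) - lam * |b - s|)) ∧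
    ∫ s : ℝ, Real.exp (-(lam * |a - s|) - lam * |b - s|)
      = Real.exp (-(lam * (b - a))) * ((b - a) + 1 / lam) := by
  set f : ℝ → ℝ := fun s => Real.exp (-(lam * |a - s|) - lam * |b - s|) with hf
  have e1 : EqOn f (fun s => Real.exp (-(lam * (a + b))) * Real.exp ((2 * lam) * s)) (Iic a) := by
    intro s hs
    simp only [mem_Iic] at hs
    have h1 : |a - s| = a - s := abs_of_nonneg (by linarith)
    have h2 : |b - s| = b - s := abs_of_nonneg (by linarith)
    simp only [hf, h1, h2, ← Real.exp_add]
    ring_nf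
  have e2 : EqOn f (fun _ => Real.exp (-(lam * (b - a)))) (Ioc a b) := by
    intro s hs
    simp only [mem_Ioc] at hs
    have h1 : |a - s| = s - a := by rw [abs_sub_comm]; exact abs_of_nonneg (by linarith [hs.1])
    have h2 : |b - s| = b - s := abs_of_nonneg (by linarith [hs.2])
    simp only [hf, h1, h2]
    ring_nf
  have e3 : EqOn f (fun s => Real.exp (lam * (a + b)) * Real.exp (-((2 * lam) * s))) (Ioi b) := by
    intro s hs
    simp only [mem_Ioi] at hs
    have h1 : |a - s| = s - a := by rw [abs_sub_comm]; exact abs_of_nonneg (by linarith)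
    have h2 : |b - s| = s - b := by rw [abs_sub_comm]; exact abs_of_nonneg (by linarith)
    simp only [hf, h1, h2, ← Real.exp_add]
    ring_nf
  have h2lam : 0 < 2 * lam := by linarith
  have i1 : IntegrableOn f (Iic a) :=
    IntegrableOn.congr_fun ((intOn_exp_Iic h2lam a).const_mul _) e1.symm measurableSet_Iic
  have i2 : IntegrableOn f (Ioc a b) := by
    refine IntegrableOn.congr_fun ((integrableOn_const_iff).mpr ?_) e2.symm measurableSet_Ioc
    right; rw [Real.volume_Ioc]; exact ENNReal.ofReal_lt_top
  have i3 : IntegrableOn f (Ioi b) :=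
    IntegrableOn.congr_fun ((intOn_exp_neg_Ioi h2lam b).const_mul _) e3.symm measurableSet_Ioi
  have iIoi : IntegrableOn f (Ioi a) := by
    rw [← Ioc_union_Ioi_eq_Ioi hab]
    exact i2.union i3
  have hint : Integrable f := by
    rw [← integrableOn_univ, ← Iic_union_Ioi (a := a)]
    exact i1.union iIoi
  refine ⟨hint, ?_⟩
  have split1 : ∫ s, f s = (∫ s in Iic a, f s) + ∫ s in Ioi a, f s :=
    (intervalIntegral.integral_Iic_add_Ioi i1 iIoi).symm
  have split2 : ∫ s in Ioi a, f s = (∫ s in Ioc a b, f s) + ∫ s in Ioi b, f s := by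
    rw [← Ioc_union_Ioi_eq_Ioi hab]
    exact setIntegral_union (Ioc_disjoint_Ioi le_rfl) measurableSet_Ioi i2 i3
  have v1 : ∫ s in Iic a, f s = Real.exp (-(lam * (b - a))) / (2 * lam) := by
    rw [setIntegral_congr_fun measurableSet_Iic e1, integral_const_mul, int_exp_Iic h2lam a,
      ← mul_div_assoc, ← Real.exp_add]
    congr 2
    ring
  have v3 : ∫ s in Ioi b, f s = Real.exp (-(lam * (b - a))) / (2 * lam) := by
    rw [setIntegral_congr_fun measurableSet_Ioi e3, integral_const_mul, int_exp_neg_Ioi h2lam b,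
      ← mul_div_assoc, ← Real.exp_add]
    congr 2
    ring
  have v2 : ∫ s in Ioc a b, f s = (b - a) * Real.exp (-(lam * (b - a))) := by
    rw [setIntegral_congr_fun measurableSet_Ioc e2, setIntegral_const, Real.volume_real_Ioc_of_le hab,
      smul_eq_mul]
  rw [split1, split2, v1, v2, v3]
  field_simp
  ring

lemma sinh_le_exp' {z : ℝ} (hz : 0 ≤ z) : Real.sinh z ≤ Real.exp z := by
  rw [Real.sinh_eq]
  nlinarith [Real.exp_pos (-z), Real.exp_pos z]

lemma sinh_le_mul_exp {z : ℝ} (hz : 0 ≤ z) : Real.sinh z ≤ z * Real.exp z := by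
  have hwv : Real.exp z * Real.exp (-z) = 1 := by
    rw [← Real.exp_add]; simp
  have hA := mul_le_mul_of_nonneg_left (Real.add_one_le_exp (-z)) (Real.exp_pos z).le
  have hB := Real.add_one_le_exp (-z)
  have hC := Real.one_le_exp hz
  rw [Real.sinh_eq]
  nlinarith [Real.exp_pos (-z), Real.exp_pos z]

lemma final_bound (lam y : ℝ) (hlam : 0 < lam) (hy : 0 < y) :
    Real.exp (-(lam * y)) * (y + 1 / lam) ≤ 2 * (y / Real.sinh (lam * y)) := by
  have hz : 0 < lam * y := by positivity
  have hspos : 0 < Real.sinh (lam * y) := by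
    rwa [← Real.sinh_zero, Real.sinh_lt_sinh]
  have hs1 : Real.sinh (lam * y) ≤ Real.exp (lam * y) := sinh_le_exp' hz.le
  have hs2 : Real.sinh (lam * y) ≤ (lam * y) * Real.exp (lam * y) := sinh_le_mul_exp hz.le
  have hexp : Real.exp (-(lam * y)) * Real.exp (lam * y) = 1 := by
    rw [← Real.exp_add]; simp
  rw [← mul_div_assoc, le_div_iff₀ hspos]
  have k1 : Real.exp (-(lam * y)) * y * Real.sinh (lam * y) ≤ y := by
    calc Real.exp (-(lam * y)) * y * Real.sinh (lam * y)
        ≤ Real.exp (-(lam * y)) * y * Real.exp (lam * y) := by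
          apply mul_le_mul_of_nonneg_left hs1 (by positivity)
      _ = y := by rw [mul_comm (Real.exp (-(lam*y))) y, mul_assoc, hexp, mul_one]
  have k2 : Real.exp (-(lam * y)) * (1 / lam) * Real.sinh (lam * y) ≤ y := by
    calc Real.exp (-(lam * y)) * (1 / lam) * Real.sinh (lam * y)
        ≤ Real.exp (-(lam * y)) * (1 / lam) * ((lam * y) * Real.exp (lam * y)) := by
          apply mul_le_mul_of_nonneg_left hs2 (by positivity)
      _ = y * (Real.exp (-(lam * y)) * Real.exp (lam * y)) / lam * lam := by ring
      _ = y := by rw [hexp]; field_simp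
  nlinarith [k1, k2]

lemma norm_aux (lam : ℝ) (hlam : 0 < lam) (t₁ t₂ u₁ u₂ : ℝ) :
    ‖∫ s : ℝ, Complex.exp (Complex.I * s * (u₁ - u₂)) *
        (((2 * Real.cosh (t₁ - s)) ^ (-lam) * (2 * Real.cosh (t₂ - s)) ^ (-lam) : ℝ) : ℂ)‖
      ≤ Real.exp (-(lam * (max t₁ t₂ - min t₁ t₂))) * ((max t₁ t₂ - min t₁ t₂) + 1 / lam) := by
  obtain ⟨hint, hval⟩ := key_lemma lam hlam (min_le_max (a := t₁) (b := t₂))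
  refine le_trans (norm_integral_le_integral_norm _) ?_
  rw [← hval]
  apply integral_mono_of_nonneg (Filter.Eventually.of_forall fun s => norm_nonneg _) hint
  refine Filter.Eventually.of_forall fun s => ?_
  simp only
  have hnorm : ‖Complex.exp (Complex.I * s * (u₁ - u₂)) *
      (((2 * Real.cosh (t₁ - s)) ^ (-lam) * (2 * Real.cosh (t₂ - s)) ^ (-lam) : ℝ) : ℂ)‖
      = (2 * Real.cosh (t₁ - s)) ^ (-lam) * (2 * Real.cosh (t₂ - s)) ^ (-lam) := by
    rw [norm_mul, Complex.norm_exp]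
    have hre : (Complex.I * s * (u₁ - u₂)).re = 0 := by simp
    rw [hre, Real.exp_zero, one_mul, Complex.norm_real, Real.norm_eq_abs]
    have h1 : (0:ℝ) < 2 * Real.cosh (t₁ - s) := by positivity
    have h2 : (0:ℝ) < 2 * Real.cosh (t₂ - s) := by positivity
    exact abs_of_nonneg (mul_nonneg (Real.rpow_nonneg h1.le _) (Real.rpow_nonneg h2.le _))
  rw [hnorm]
  have hcosh : ∀ t : ℝ, (2 * Real.cosh (t - s)) ^ (-lam) ≤ Real.exp (-(lam * |t - s|)) := by
    intro t
    have h1 : Real.exp |t - s| ≤ 2 * Real.cosh (t - s) := by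
      rw [Real.cosh_eq]
      rcases abs_cases (t - s) with ⟨h, _⟩ | ⟨h, _⟩ <;> rw [h] <;>
        nlinarith [Real.exp_pos (t - s), Real.exp_pos (-(t - s))]
    calc (2 * Real.cosh (t - s)) ^ (-lam) ≤ (Real.exp |t - s|) ^ (-lam) :=
          Real.rpow_le_rpow_of_nonpos (Real.exp_pos _) h1 (by linarith)
      _ = Real.exp (-(lam * |t - s|)) := by
          rw [← Real.exp_mul]; ring_nf
  have hsum : |t₁ - s| + |t₂ - s| = |min t₁ t₂ - s| + |max t₁ t₂ - s| := by
    rcases le_total t₁ t₂ with h | h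
    · rw [min_eq_left h, max_eq_right h]
    · rw [min_eq_right h, max_eq_left h]; ring
  calc (2 * Real.cosh (t₁ - s)) ^ (-lam) * (2 * Real.cosh (t₂ - s)) ^ (-lam)
      ≤ Real.exp (-(lam * |t₁ - s|)) * Real.exp (-(lam * |t₂ - s|)) := by
        apply mul_le_mul (hcosh t₁) (hcosh t₂)
          (Real.rpow_nonneg (by positivity) _) (Real.exp_pos _).le
    _ = Real.exp (-(lam * |min t₁ t₂ - s|) - lam * |max t₁ t₂ - s|) := by
        rw [← Real.exp_add]
        congr 1
        have := hsum
        nlinarith [hsum]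

theorem F2_bound (lam : ℝ) (hlam : 0 < lam) :
    ∃ C : ℝ, 0 < C ∧ ∀ t₁ t₂ u₁ u₂ : ℝ, t₁ ≠ t₂ →
      ‖Complex.exp (Complex.I * u₂ * (t₁ + t₂)) *
          ∫ s : ℝ, Complex.exp (Complex.I * s * (u₁ - u₂)) *
            (((2 * Real.cosh (t₁ - s)) ^ (-lam) * (2 * Real.cosh (t₂ - s)) ^ (-lam) : ℝ) : ℂ)‖
        ≤ C * ((t₁ - t₂) / Real.sinh (lam * (t₁ - t₂))) := by
  refine ⟨2, two_pos, ?_⟩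
  intro t₁ t₂ u₁ u₂ hne
  have hdiff : max t₁ t₂ - min t₁ t₂ = |t₁ - t₂| := by
    rcases le_total t₁ t₂ with h | h
    · rw [min_eq_left h, max_eq_right h, abs_of_nonpos (by linarith)]; ring
    · rw [min_eq_right h, max_eq_left h, abs_of_nonneg (by linarith)]
  have hy : 0 < |t₁ - t₂| := abs_pos.mpr (sub_ne_zero.mpr hne)
  have hnorm1 : ‖Complex.exp (Complex.I * u₂ * (t₁ + t₂))‖ = 1 := by
    rw [Complex.norm_exp]
    have : (Complex.I * u₂ * (t₁ + t₂)).re = 0 := by simp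
    rw [this, Real.exp_zero]
  rw [norm_mul, hnorm1, one_mul]
  have hdivrw : (t₁ - t₂) / Real.sinh (lam * (t₁ - t₂))
      = |t₁ - t₂| / Real.sinh (lam * |t₁ - t₂|) := by
    rcases abs_cases (t₁ - t₂) with ⟨h, _⟩ | ⟨h, _⟩
    · rw [h]
    · rw [h, mul_neg, Real.sinh_neg, neg_div_neg_eq]
  rw [hdivrw]
  calc ‖∫ s : ℝ, Complex.exp (Complex.I * s * (u₁ - u₂)) *
          (((2 * Real.cosh (t₁ - s)) ^ (-lam) * (2 * Real.cosh (t₂ - s)) ^ (-lam) : ℝ) : ℂ)‖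
      ≤ Real.exp (-(lam * (max t₁ t₂ - min t₁ t₂))) * ((max t₁ t₂ - min t₁ t₂) + 1 / lam) :=
        norm_aux lam hlam t₁ t₂ u₁ u₂
    _ = Real.exp (-(lam * |t₁ - t₂|)) * (|t₁ - t₂| + 1 / lam) := by rw [hdiff]
    _ ≤ 2 * (|t₁ - t₂| / Real.sinh (lam * |t₁ - t₂|)) := final_bound lam _ hlam hy
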